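/- The RDFAwtl A_{∨,c} with states q₀,…,q₇, alphabet {a,b,c}, translucency τ(q₀)={a,b}, τ(q₁)=∅, τ(q₂)={a}, τ(q₃)={b}, τ(q₄)=∅, τ(q₅)={a}, τ(q₆)={a}, τ(q₇)={b}, and transitions δ(q₀,c)=q₁, δ(q₀,◁)=q₄, δ(q₁,a)=q₂, δ(q₁,b)=q₃, δ(q₁,◁)=Accept, δ(q₂,b)=q₁, δ(q₃,a)=q₁, δ(q₄,a)=q₅, δ(q₄,b)=q₇, δ(q₄,◁)=Accept, δ(q₅,b)=q₆, δ(q₆,b)=q₄, δ(q₇,a)=q₆ (all other values empty) accepts exactly the language L_{∨,c} = { w ∈ {a,b,c}* : |w|_c = 1 and |w|_a = |w|_b } ∪ { w ∈ {a,b}* : 2·|w|_a = |w|_b }. -/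

import Mathlib

/-- A nondeterministic finite automaton with translucent letters (NFAwtl). -/
structure NFAwtl (Q α : Type) where
  τ : Q → Set α
  I : Set Q
  F : Set Q
  δ : Q → α → Set Q
  tr : ∀ q a, a ∈ τ q → δ q a = ∅

namespace NFAwtl

variable {Q α : Type}

/-- One computation step of an NFAwtl: delete the leftmost non-translucent letter
and change state (the head returns to the left end). -/
def Step (A : NFAwtl Q α) : Q × List α → Q × List α → Prop := fun c c' =>
  ∃ u a v, c.2 = u ++ a :: v ∧ (∀ x ∈ u, x ∈ A.τ c.1) ∧ a ∉ A.τ c.1 ∧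
    c'.1 ∈ A.δ c.1 a ∧ c'.2 = u ++ v

/-- Acceptance: from some initial state, reach a configuration whose remaining
letters are all translucent for a final state. -/
def Accepts (A : NFAwtl Q α) (w : List α) : Prop :=
  ∃ q₀ ∈ A.I, ∃ q w', Relation.ReflTransGen A.Step (q₀, w) (q, w') ∧
    (∀ x ∈ w', x ∈ A.τ q) ∧ q ∈ A.F

def lang (A : NFAwtl Q α) : Set (List α) := { w | A.Accepts w }

/-- A DFAwtl: single initial state and at most one transition per state/letter. -/
def Deterministic (A : NFAwtl Q α) : Prop :=
  (∃ q₀, A.I = {q₀}) ∧ ∀ q a, (A.δ q a).Subsingleton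

end NFAwtl

/-- A repetitive NFAwtl (RNFAwtl): on the end-of-tape marker it may accept
(states in `Facc`) or change state via `δend` and continue. -/
structure RNFAwtl (Q α : Type) where
  τ : Q → Set α
  I : Set Q
  δ : Q → α → Set Q
  δend : Q → Set Q
  Facc : Set Q
  tr : ∀ q a, a ∈ τ q → δ q a = ∅
  accEnd : ∀ q, q ∈ Facc → δend q = ∅

namespace RNFAwtl

variable {Q α : Type}

/-- One computation step of an RNFAwtl: either delete the leftmost
non-translucent letter, or, when all remaining letters are translucent,
change state via a `◁`-transition and continue. -/
def Step (A : RNFAwtl Q α) : Q × List α → Q × List α → Prop := fun c c' =>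
  (∃ u a v, c.2 = u ++ a :: v ∧ (∀ x ∈ u, x ∈ A.τ c.1) ∧ a ∉ A.τ c.1 ∧
    c'.1 ∈ A.δ c.1 a ∧ c'.2 = u ++ v)
  ∨ ((∀ x ∈ c.2, x ∈ A.τ c.1) ∧ c'.1 ∈ A.δend c.1 ∧ c'.2 = c.2)

def Accepts (A : RNFAwtl Q α) (w : List α) : Prop :=
  ∃ q₀ ∈ A.I, ∃ q w', Relation.ReflTransGen A.Step (q₀, w) (q, w') ∧
    (∀ x ∈ w', x ∈ A.τ q) ∧ q ∈ A.Facc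

def lang (A : RNFAwtl Q α) : Set (List α) := { w | A.Accepts w }

/-- An RDFAwtl: single initial state and deterministic transitions. -/
def Deterministic (A : RNFAwtl Q α) : Prop :=
  (∃ q₀, A.I = {q₀}) ∧ (∀ q a, (A.δ q a).Subsingleton) ∧ ∀ q, (A.δend q).Subsingleton

end RNFAwtl

/-- A non-returning repetitive NFAwtl (nr-NFAwtl): the head continues from the
position of the last deleted letter; on the end-of-tape marker it may change
state and return the head to the left end. -/
structure NrNFAwtl (Q α : Type) where
  τ : Q → Set α
  I : Set Q
  δ : Q → α → Set Q
  δend : Q → Set Q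
  Facc : Set Q
  tr : ∀ q a, a ∈ τ q → δ q a = ∅
  accEnd : ∀ q, q ∈ Facc → δend q = ∅

namespace NrNFAwtl

variable {Q α : Type}

/-- Configurations are `(x, q, w)`: `x` is the already-skipped prefix, the head
is on the first letter of `w`. -/
def Step (A : NrNFAwtl Q α) :
    List α × Q × List α → List α × Q × List α → Prop := fun c c' =>
  (∃ u a v, c.2.2 = u ++ a :: v ∧ (∀ x ∈ u, x ∈ A.τ c.2.1) ∧ a ∉ A.τ c.2.1 ∧
    c'.2.1 ∈ A.δ c.2.1 a ∧ c'.1 = c.1 ++ u ∧ c'.2.2 = v)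
  ∨ ((∀ x ∈ c.2.2, x ∈ A.τ c.2.1) ∧ c'.2.1 ∈ A.δend c.2.1 ∧ c'.1 = [] ∧
    c'.2.2 = c.1 ++ c.2.2)

def Accepts (A : NrNFAwtl Q α) (w : List α) : Prop :=
  ∃ q₀ ∈ A.I, ∃ x q w', Relation.ReflTransGen A.Step ([], q₀, w) (x, q, w') ∧
    (∀ y ∈ w', y ∈ A.τ q) ∧ q ∈ A.Facc

def lang (A : NrNFAwtl Q α) : Set (List α) := { w | A.Accepts w }

def Deterministic (A : NrNFAwtl Q α) : Prop :=
  (∃ q₀, A.I = {q₀}) ∧ (∀ q a, (A.δ q a).Subsingleton) ∧ ∀ q, (A.δend q).Subsingleton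

end NrNFAwtl

/-- A non-repetitive non-returning NFAwtl (nr-nr-NFAwtl): non-returning, and it
must halt as soon as all remaining letters to the right are translucent. -/
structure NrnrNFAwtl (Q α : Type) where
  τ : Q → Set α
  I : Set Q
  F : Set Q
  δ : Q → α → Set Q
  tr : ∀ q a, a ∈ τ q → δ q a = ∅

namespace NrnrNFAwtl

variable {Q α : Type}

def Step (A : NrnrNFAwtl Q α) :
    List α × Q × List α → List α × Q × List α → Prop := fun c c' =>
  ∃ u a v, c.2.2 = u ++ a :: v ∧ (∀ x ∈ u, x ∈ A.τ c.2.1) ∧ a ∉ A.τ c.2.1 ∧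
    c'.2.1 ∈ A.δ c.2.1 a ∧ c'.1 = c.1 ++ u ∧ c'.2.2 = v

def Accepts (A : NrnrNFAwtl Q α) (w : List α) : Prop :=
  ∃ q₀ ∈ A.I, ∃ x q w', Relation.ReflTransGen A.Step ([], q₀, w) (x, q, w') ∧
    (∀ y ∈ w', y ∈ A.τ q) ∧ q ∈ A.F

def lang (A : NrnrNFAwtl Q α) : Set (List α) := { w | A.Accepts w }

def Deterministic (A : NrnrNFAwtl Q α) : Prop :=
  (∃ q₀, A.I = {q₀}) ∧ ∀ q a, (A.δ q a).Subsingleton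

end NrnrNFAwtl

/-- Language classes. -/
def NFAwtlLangs (α : Type) [Fintype α] : Set (Set (List α)) :=
  { L | ∃ (Q : Type) (_ : Fintype Q) (A : NFAwtl Q α), A.lang = L }

def DFAwtlLangs (α : Type) [Fintype α] : Set (Set (List α)) :=
  { L | ∃ (Q : Type) (_ : Fintype Q) (A : NFAwtl Q α), A.Deterministic ∧ A.lang = L }

def RNFAwtlLangs (α : Type) [Fintype α] : Set (Set (List α)) :=
  { L | ∃ (Q : Type) (_ : Fintype Q) (A : RNFAwtl Q α), A.lang = L }

def RDFAwtlLangs (α : Type) [Fintype α] : Set (Set (List α)) :=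
  { L | ∃ (Q : Type) (_ : Fintype Q) (A : RNFAwtl Q α), A.Deterministic ∧ A.lang = L }

def NrNFAwtlLangs (α : Type) [Fintype α] : Set (Set (List α)) :=
  { L | ∃ (Q : Type) (_ : Fintype Q) (A : NrNFAwtl Q α), A.lang = L }

def NrDFAwtlLangs (α : Type) [Fintype α] : Set (Set (List α)) :=
  { L | ∃ (Q : Type) (_ : Fintype Q) (A : NrNFAwtl Q α), A.Deterministic ∧ A.lang = L }

def NrnrNFAwtlLangs (α : Type) [Fintype α] : Set (Set (List α)) :=
  { L | ∃ (Q : Type) (_ : Fintype Q) (A : NrnrNFAwtl Q α), A.lang = L }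

def NrnrDFAwtlLangs (α : Type) [Fintype α] : Set (Set (List α)) :=
  { L | ∃ (Q : Type) (_ : Fintype Q) (A : NrnrNFAwtl Q α), A.Deterministic ∧ A.lang = L }

/-- The three-letter alphabet {a, b, c}. -/
inductive Al : Type
  | a | b | c
deriving DecidableEq

instance instFintypeAl : Fintype Al :=
  ⟨{Al.a, Al.b, Al.c}, fun x => by cases x <;> simp⟩

/-- The language L_{∨,c} = { w ∈ {a,b,c}* : |w|_c = 1, |w|_a = |w|_b }
    ∪ { w ∈ {a,b}* : 2·|w|_a = |w|_b }. -/
def Lvc : Set (List Al) :=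
  { w | w.count Al.c = 1 ∧ w.count Al.a = w.count Al.b } ∪
  { w | Al.c ∉ w ∧ 2 * w.count Al.a = w.count Al.b }

/-- The eight states q₀, …, q₇ of the RDFAwtl A_{∨,c}. -/
inductive St : Type
  | q0 | q1 | q2 | q3 | q4 | q5 | q6 | q7
deriving DecidableEq

instance instFintypeSt : Fintype St :=
  ⟨{St.q0, St.q1, St.q2, St.q3, St.q4, St.q5, St.q6, St.q7}, fun x => by cases x <;> simp⟩

open St Al

def τf : St → Set Al
  | q0 => {a, b} | q1 => ∅ | q2 => {a} | q3 => {b}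
  | q4 => ∅      | q5 => {a} | q6 => {a} | q7 => {b}

def δf : St → Al → Set St
  | q0, c => {q1}
  | q1, a => {q2} | q1, b => {q3}
  | q2, b => {q1} | q3, a => {q1}
  | q4, a => {q5} | q4, b => {q7}
  | q5, b => {q6} | q6, b => {q4} | q7, a => {q6}
  | _, _ => ∅

def δendf : St → Set St
  | q0 => {q4}
  | _ => ∅

/-! ### Auxiliary development -/

def Avc : RNFAwtl St Al where
  τ := τf
  I := {q0}
  δ := δf
  δend := δendf
  Facc := {q1, q4}
  tr := by intro q x h; cases q <;> cases x <;> simp_all [τf, δf]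
  accEnd := by intro q h; cases q <;> simp_all [δendf]

lemma split_first {β : Type} [DecidableEq β] (x : β) :
    ∀ l : List β, x ∈ l → ∃ p r, l = p ++ x :: r ∧ x ∉ p := by
  intro l h
  induction l with
  | nil => simp at h
  | cons y t ih =>
    by_cases hy : y = x
    · exact ⟨[], t, by simp [hy], by simp⟩
    · obtain ⟨p, r, h1, h2⟩ := ih ((List.mem_cons.mp h).resolve_left (fun hh : _ = _ => hy hh.symm))
      exact ⟨y :: p, r, by simp [h1], by simp [h2]; exact Ne.symm hy⟩

lemma stepRead (q q' : St) (x : Al) (u v : List Al)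
    (h1 : ∀ y ∈ u, y ∈ τf q) (h2 : x ∉ τf q) (h3 : q' ∈ δf q x) :
    Avc.Step (q, u ++ x :: v) (q', u ++ v) :=
  Or.inl ⟨u, x, v, rfl, h1, h2, h3, rfl⟩

lemma stepEnd (q q' : St) (w : List Al) (h1 : ∀ y ∈ w, y ∈ τf q)
    (h2 : q' ∈ δendf q) : Avc.Step (q, w) (q', w) :=
  Or.inr ⟨h1, h2, rfl⟩

lemma not_a (x : Al) (h1 : x ≠ Al.a) (h2 : x ≠ Al.c) : x = Al.b := by
  cases x <;> simp_all

lemma not_b (x : Al) (h1 : x ≠ Al.b) (h2 : x ≠ Al.c) : x = Al.a := by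
  cases x <;> simp_all

/-- From `q1`, a `c`-free word with equally many `a`s and `b`s is consumed. -/
lemma runA : ∀ n (z : List Al), z.length = n → Al.c ∉ z →
    z.count Al.a = z.count Al.b →
    Relation.ReflTransGen Avc.Step (q1, z) (q1, []) := by
  intro n
  induction n using Nat.strong_induction_on with
  | _ n ih =>
    intro z hlen hc hab
    match z with
    | [] => exact .refl
    | x :: z' =>
      have hc' : Al.c ∉ z' := fun h => hc (List.mem_cons_of_mem _ h)
      cases x with
      | c => exact absurd (List.mem_cons_self) hc
      | a =>
        have hab' : z'.count Al.a + 1 = z'.count Al.b := by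
          simp [List.count_cons] at hab; omega
        have hb : Al.b ∈ z' := List.count_pos_iff.mp (by omega)
        obtain ⟨p, r, hz, hp⟩ := split_first Al.b z' hb
        have hpa : ∀ y ∈ p, y = Al.a := fun y hy =>
          not_b y (fun h => hp (h ▸ hy)) (fun h => hc' (hz ▸ (h ▸ List.mem_append_left _ hy)))
        have s1 : Avc.Step (q1, Al.a :: z') (q2, z') :=
          stepRead q1 q2 Al.a [] z' (by simp) (by simp [τf]) (by simp [δf])
        have s2 : Avc.Step (q2, z') (q1, p ++ r) := by
          rw [hz]
          exact stepRead q2 q1 Al.b p r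
            (fun y hy => by rw [hpa y hy]; simp [τf]) (by simp [τf]) (by simp [δf])
        have hcount : ∀ t : Al, z'.count t = p.count t + (Al.b :: r).count t := by
          intro t; rw [hz]; simp [List.count_append]
        have tail : Relation.ReflTransGen Avc.Step (q1, p ++ r) (q1, []) := by
          apply ih (p ++ r).length _ _ rfl
          · intro h; rcases List.mem_append.mp h with h | h
            · exact hc' (hz ▸ List.mem_append_left _ h)
            · exact hc' (hz ▸ List.mem_append_right _ (List.mem_cons_of_mem _ h))
          · have h1 := hcount Al.a; have h2 := hcount Al.b
            simp [List.count_cons] at h1 h2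
            simp [List.count_append]; omega
          · have : z'.length = p.length + r.length + 1 := by rw [hz]; simp; try omega
            have hlen' : z'.length + 1 = n := by simpa using hlen
            simp only [List.length_append]
            omega
        exact .head s1 (.head s2 tail)
      | b =>
        have hab' : z'.count Al.a = z'.count Al.b + 1 := by
          simp [List.count_cons] at hab; omega
        have hb : Al.a ∈ z' := List.count_pos_iff.mp (by omega)
        obtain ⟨p, r, hz, hp⟩ := split_first Al.a z' hb
        have hpa : ∀ y ∈ p, y = Al.b := fun y hy =>
          not_a y (fun h => hp (h ▸ hy)) (fun h => hc' (hz ▸ (h ▸ List.mem_append_left _ hy)))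
        have s1 : Avc.Step (q1, Al.b :: z') (q3, z') :=
          stepRead q1 q3 Al.b [] z' (by simp) (by simp [τf]) (by simp [δf])
        have s2 : Avc.Step (q3, z') (q1, p ++ r) := by
          rw [hz]
          exact stepRead q3 q1 Al.a p r
            (fun y hy => by rw [hpa y hy]; simp [τf]) (by simp [τf]) (by simp [δf])
        have hcount : ∀ t : Al, z'.count t = p.count t + (Al.a :: r).count t := by
          intro t; rw [hz]; simp [List.count_append]
        have tail : Relation.ReflTransGen Avc.Step (q1, p ++ r) (q1, []) := by
          apply ih (p ++ r).length _ _ rfl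
          · intro h; rcases List.mem_append.mp h with h | h
            · exact hc' (hz ▸ List.mem_append_left _ h)
            · exact hc' (hz ▸ List.mem_append_right _ (List.mem_cons_of_mem _ h))
          · have h1 := hcount Al.a; have h2 := hcount Al.b
            simp [List.count_cons] at h1 h2
            simp [List.count_append]; omega
          · have : z'.length = p.length + r.length + 1 := by rw [hz]; simp; try omega
            have hlen' : z'.length + 1 = n := by simpa using hlen
            simp only [List.length_append]
            omega
        exact .head s1 (.head s2 tail)

/-- Splitting off the first `b`, with all-`a` prefix, in a `c`-free word. -/
lemma split_b (m : List Al) (hc : Al.c ∉ m) (hb : Al.b ∈ m) :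
    ∃ p r, m = p ++ Al.b :: r ∧ (∀ y ∈ p, y = Al.a) := by
  obtain ⟨p, r, h1, h2⟩ := split_first Al.b m hb
  exact ⟨p, r, h1, fun y hy =>
    not_b y (fun h => h2 (h ▸ hy)) (fun h => hc (h1 ▸ (h ▸ List.mem_append_left _ hy)))⟩

lemma split_a (m : List Al) (hc : Al.c ∉ m) (hb : Al.a ∈ m) :
    ∃ p r, m = p ++ Al.a :: r ∧ (∀ y ∈ p, y = Al.b) := by
  obtain ⟨p, r, h1, h2⟩ := split_first Al.a m hb
  exact ⟨p, r, h1, fun y hy =>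
    not_a y (fun h => h2 (h ▸ hy)) (fun h => hc (h1 ▸ (h ▸ List.mem_append_left _ hy)))⟩

lemma notc_append {p r : List Al} (h1 : Al.c ∉ p) (h2 : Al.c ∉ r) :
    Al.c ∉ p ++ r := by
  intro h; rcases List.mem_append.mp h with h | h
  · exact h1 h
  · exact h2 h

lemma notc_split {p r : List Al} {x : Al} (hx : x ≠ Al.c)
    (h : Al.c ∉ p ++ x :: r) : Al.c ∉ p ∧ Al.c ∉ r := by
  constructor
  · exact fun hh => h (List.mem_append_left _ hh)
  · exact fun hh => h (List.mem_append_right _ (List.mem_cons_of_mem _ hh))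

lemma count_split (t x : Al) (p r : List Al) :
    (p ++ x :: r).count t = p.count t + r.count t + (if x = t then 1 else 0) := by
  simp [List.count_append, List.count_cons]
  rcases x <;> rcases t <;> simp <;> omega

/-- From `q4`, a `c`-free word with twice as many `b`s as `a`s is consumed. -/
lemma runB : ∀ n (z : List Al), z.length = n → Al.c ∉ z →
    2 * z.count Al.a = z.count Al.b →
    Relation.ReflTransGen Avc.Step (q4, z) (q4, []) := by
  intro n
  induction n using Nat.strong_induction_on with
  | _ n ih =>
    intro z hlen hc hab
    match z with
    | [] => exact .refl
    | x :: z' =>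
      have hc' : Al.c ∉ z' := fun h => hc (List.mem_cons_of_mem _ h)
      have hlen' : z'.length + 1 = n := by simpa using hlen
      cases x with
      | c => exact absurd (List.mem_cons_self) hc
      | a =>
        have hab' : 2 * z'.count Al.a + 2 = z'.count Al.b := by
          simp [List.count_cons] at hab; omega
        obtain ⟨p, r, hz, hp⟩ := split_b z' hc' (List.count_pos_iff.mp (by omega))
        obtain ⟨hcp, hcr⟩ := notc_split (by simp) (hz ▸ hc')
        have c1a : z'.count Al.a = p.count Al.a + r.count Al.a := by
          rw [hz, count_split]; simp
        have c1b : z'.count Al.b = p.count Al.b + r.count Al.b + 1 := by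
          rw [hz, count_split]; simp
        have m1c : Al.c ∉ p ++ r := notc_append hcp hcr
        have m1b : Al.b ∈ p ++ r := by
          apply List.count_pos_iff.mp
          rw [List.count_append]
          omega
        obtain ⟨p2, r2, hm, hp2⟩ := split_b (p ++ r) m1c m1b
        obtain ⟨hcp2, hcr2⟩ := notc_split (by simp) (hm ▸ m1c)
        have s1 : Avc.Step (q4, Al.a :: z') (q5, z') :=
          stepRead q4 q5 Al.a [] z' (by simp) (by simp [τf]) (by simp [δf])
        have s2 : Avc.Step (q5, z') (q6, p ++ r) := by
          rw [hz]
          exact stepRead q5 q6 Al.b p r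
            (fun y hy => by rw [hp y hy]; simp [τf]) (by simp [τf]) (by simp [δf])
        have s3 : Avc.Step (q6, p ++ r) (q4, p2 ++ r2) := by
          rw [hm]
          exact stepRead q6 q4 Al.b p2 r2
            (fun y hy => by rw [hp2 y hy]; simp [τf]) (by simp [τf]) (by simp [δf])
        have tail : Relation.ReflTransGen Avc.Step (q4, p2 ++ r2) (q4, []) := by
          apply ih (p2 ++ r2).length _ _ rfl (notc_append hcp2 hcr2)
          · have c2a : (p ++ r).count Al.a = p2.count Al.a + r2.count Al.a := by
              rw [hm, count_split]; simp
            have c2b : (p ++ r).count Al.b = p2.count Al.b + r2.count Al.b + 1 := by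
              rw [hm, count_split]; simp
            simp [List.count_append] at c2a c2b ⊢
            omega
          · have l1 : z'.length = p.length + r.length + 1 := by rw [hz]; simp; try omega
            have l2 : p.length + r.length = p2.length + r2.length + 1 := by
              have := congrArg List.length hm; simp at this; omega
            simp only [List.length_append]; omega
        exact .head s1 (.head s2 (.head s3 tail))
      | b =>
        have hab' : 2 * z'.count Al.a = z'.count Al.b + 1 := by
          simp [List.count_cons] at hab; omega
        obtain ⟨p, r, hz, hp⟩ := split_a z' hc' (List.count_pos_iff.mp (by omega))
        obtain ⟨hcp, hcr⟩ := notc_split (by simp) (hz ▸ hc')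
        have c1a : z'.count Al.a = p.count Al.a + r.count Al.a + 1 := by
          rw [hz, count_split]; simp
        have c1b : z'.count Al.b = p.count Al.b + r.count Al.b := by
          rw [hz, count_split]; simp
        have m1c : Al.c ∉ p ++ r := notc_append hcp hcr
        have m1b : Al.b ∈ p ++ r := by
          apply List.count_pos_iff.mp
          rw [List.count_append]
          omega
        obtain ⟨p2, r2, hm, hp2⟩ := split_b (p ++ r) m1c m1b
        obtain ⟨hcp2, hcr2⟩ := notc_split (by simp) (hm ▸ m1c)
        have s1 : Avc.Step (q4, Al.b :: z') (q7, z') :=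
          stepRead q4 q7 Al.b [] z' (by simp) (by simp [τf]) (by simp [δf])
        have s2 : Avc.Step (q7, z') (q6, p ++ r) := by
          rw [hz]
          exact stepRead q7 q6 Al.a p r
            (fun y hy => by rw [hp y hy]; simp [τf]) (by simp [τf]) (by simp [δf])
        have s3 : Avc.Step (q6, p ++ r) (q4, p2 ++ r2) := by
          rw [hm]
          exact stepRead q6 q4 Al.b p2 r2
            (fun y hy => by rw [hp2 y hy]; simp [τf]) (by simp [τf]) (by simp [δf])
        have tail : Relation.ReflTransGen Avc.Step (q4, p2 ++ r2) (q4, []) := by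
          apply ih (p2 ++ r2).length _ _ rfl (notc_append hcp2 hcr2)
          · have c2a : (p ++ r).count Al.a = p2.count Al.a + r2.count Al.a := by
              rw [hm, count_split]; simp
            have c2b : (p ++ r).count Al.b = p2.count Al.b + r2.count Al.b + 1 := by
              rw [hm, count_split]; simp
            simp [List.count_append] at c2a c2b ⊢
            omega
          · have l1 : z'.length = p.length + r.length + 1 := by rw [hz]; simp; try omega
            have l2 : p.length + r.length = p2.length + r2.length + 1 := by
              have := congrArg List.length hm; simp at this; omega
            simp only [List.length_append]; omega
        exact .head s1 (.head s2 (.head s3 tail))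

/-- Backward invariant: configurations from which acceptance is meaningful. -/
def G : St → List Al → Prop
  | q0, w => w ∈ Lvc
  | q1, w => Al.c ∉ w ∧ w.count Al.a = w.count Al.b
  | q2, w => Al.c ∉ w ∧ w.count Al.a + 1 = w.count Al.b
  | q3, w => Al.c ∉ w ∧ w.count Al.a = w.count Al.b + 1
  | q4, w => Al.c ∉ w ∧ 2 * w.count Al.a = w.count Al.b
  | q5, w => Al.c ∉ w ∧ 2 * w.count Al.a + 2 = w.count Al.b
  | q6, w => Al.c ∉ w ∧ 2 * w.count Al.a + 1 = w.count Al.b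
  | q7, w => Al.c ∉ w ∧ 2 * w.count Al.a = w.count Al.b + 1

lemma all_tau_empty {q : St} (h : τf q = (∅ : Set Al)) {u : List Al}
    (hu : ∀ y ∈ u, y ∈ τf q) : u = [] := by
  cases u with
  | nil => rfl
  | cons y t => exact absurd (hu y (List.mem_cons_self)) (by rw [h]; simp)

lemma notc_mid {u v : List Al} {x : Al} (hx : x ≠ Al.c) (h : Al.c ∉ u ++ v) :
    Al.c ∉ u ++ x :: v := by
  intro hh
  rcases List.mem_append.mp hh with h1 | h1
  · exact h (List.mem_append_left _ h1)
  · rcases List.mem_cons.mp h1 with h1 | h1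
    · exact hx h1.symm
    · exact h (List.mem_append_right _ h1)

lemma back (q q' : St) (w w' : List Al) (hs : Avc.Step (q, w) (q', w'))
    (hg : G q' w') : G q w := by
  rcases hs with ⟨u, x, v, hw, hu, hx, hq', hw'⟩ | ⟨hall, hq', hw'⟩
  · simp only at hw hw' hq' hu hx
    subst hw; subst hw'
    cases q <;> cases x <;> simp [Avc, τf] at hx <;>
      simp [Avc, δf] at hq' <;> subst hq' <;> obtain ⟨hc, hab⟩ := hg <;>
      skip
    all_goals first
      | (refine Or.inl ⟨?_, ?_⟩
         · have h1 : u.count Al.c = 0 :=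
             List.count_eq_zero.mpr (fun h => hc (List.mem_append_left _ h))
           have h2 : v.count Al.c = 0 :=
             List.count_eq_zero.mpr (fun h => hc (List.mem_append_right _ h))
           rw [count_split]; simp [h1, h2]
         · rw [count_split, count_split]
           simp only [List.count_append] at hab
           simp
           omega)
      | (refine ⟨notc_mid (by simp) hc, ?_⟩
         rw [count_split, count_split]
         simp only [List.count_append] at hab
         simp
         omega)
  · simp only at hall hq' hw'
    subst hw'
    cases q <;> simp [Avc, δendf] at hq'
    subst hq'
    obtain ⟨hc, hab⟩ := hg
    right
    exact ⟨hc, hab⟩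

lemma reach_G (cfg cfg' : St × List Al)
    (h : Relation.ReflTransGen Avc.Step cfg cfg') :
    G cfg'.1 cfg'.2 → G cfg.1 cfg.2 := by
  induction h using Relation.ReflTransGen.head_induction_on with
  | refl => exact id
  | head s _ ih =>
    intro hg
    exact back _ _ _ _ (by exact s) (ih hg)

lemma Avc_det : Avc.Deterministic := by
  refine ⟨⟨q0, rfl⟩, ?_, ?_⟩
  · intro q x
    cases q <;> cases x <;> simp [Avc, δf] <;>
      first
        | exact Set.subsingleton_empty
        | exact Set.subsingleton_singleton
  · intro q
    cases q <;> simp [Avc, δendf] <;>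
      first
        | exact Set.subsingleton_empty
        | exact Set.subsingleton_singleton

lemma Avc_lang : Avc.lang = Lvc := by
  ext w
  constructor
  · rintro ⟨p, hp, q, w', run, htr, hF⟩
    have hp0 : p = q0 := by simpa [Avc] using hp
    subst hp0
    have hq : q = q1 ∨ q = q4 := by simpa [Avc] using hF
    have hw' : w' = [] := by
      rcases hq with h | h <;> subst h
      · exact all_tau_empty (q := St.q1) rfl htr
      · exact all_tau_empty (q := St.q4) rfl htr
    subst hw'
    have hG : G q [] := by
      rcases hq with h | h <;> subst h <;> exact ⟨by simp, by simp⟩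
    exact reach_G (q0, w) (q, []) run hG
  · intro hw
    rcases hw with ⟨hc1, hab⟩ | ⟨hc0, hab⟩
    · -- exactly one c
      have hcmem : Al.c ∈ w := List.count_pos_iff.mp (by omega)
      obtain ⟨u, v, hwu, hcu⟩ := split_first Al.c w hcmem
      have hcv : Al.c ∉ v := by
        intro h
        have hu0 : u.count Al.c = 0 := List.count_eq_zero.mpr hcu
        have := hc1
        rw [hwu, count_split] at this
        simp [hu0] at this
        exact absurd (List.count_eq_zero.mp this) (fun _ => (List.count_eq_zero.mp this) h)
      have s0 : Avc.Step (q0, w) (q1, u ++ v) := by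
        rw [hwu]
        exact stepRead q0 q1 Al.c u v
          (fun y hy => by
            cases y with
            | a => simp [τf]
            | b => simp [τf]
            | c => exact absurd hy hcu)
          (by simp [τf]) (by simp [δf])
      have hcuv : Al.c ∉ u ++ v := notc_append hcu hcv
      have habuv : (u ++ v).count Al.a = (u ++ v).count Al.b := by
        rw [hwu, count_split, count_split] at hab
        simp [List.count_append] at hab ⊢
        omega
      refine ⟨q0, by simp [Avc], q1, [], ?_, by simp, by simp [Avc]⟩
      exact .head s0 (runA (u ++ v).length (u ++ v) rfl hcuv habuv)
    · -- no c
      have s0 : Avc.Step (q0, w) (q4, w) :=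
        stepEnd q0 q4 w
          (fun y hy => by
            cases y with
            | a => simp [τf]
            | b => simp [τf]
            | c => exact absurd hy hc0)
          (by simp [δendf])
      refine ⟨q0, by simp [Avc], q4, [], ?_, by simp, by simp [Avc]⟩
      exact .head s0 (runB w.length w rfl hc0 hab)
/-- the RDFAwtl A_{∨,c} (with the given translucency mapping and
transitions, accepting on ◁ in states q₁ and q₄) accepts exactly L_{∨,c}. -/
theorem Avc_accepts_Lvc :
    ∃ A : RNFAwtl St Al,
      A.I = {q0} ∧ A.τ = τf ∧ A.δ = δf ∧ A.δend = δendf ∧ A.Facc = {q1, q4} ∧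
      A.Deterministic ∧ A.lang = Lvc := by
  exact ⟨Avc, rfl, rfl, rfl, rfl, rfl, Avc_det, Avc_lang⟩
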